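/- Let 0 < σ ≤ ρ. For every k = 2^{a₁} + 2^{a₂} ∈ N₂∖N₁ with a₁ > a₂ ≥ 0 and every m ∈ L_{k,2}: sup_{x∈ℝ} |W̃^{(φ_σ)}_{k,m,2}(x)|/φ_ρ(x) ≤ 2^{σ²/ρ²}·√(π/8)·ρ · 2^{a₂/2}/2^{a₁ + β₁·a₂}, where β₁ := 1 − σ²/ρ². -/

import Mathlib

open scoped Classical
open MeasureTheory
noncomputable section

/-- The binary digit `ξ_{i+1}` of `x ∈ [0,1)`. -/
def rdigit (x : ℝ) (i : ℕ) : ℕ := (⌊x * 2 ^ (i + 1)⌋).toNat % 2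

/-- The `k`-th Walsh function in base `2`. -/
def walsh (k : ℕ) (x : ℝ) : ℝ :=
  (-1 : ℝ) ^ ∑ i ∈ Finset.range (Nat.size k), (Nat.testBit k i).toNat * rdigit x i

/-- The order-2 localized Walsh function `w_{k,m,2}` for `k = 2^{a₁} + 2^{a₂} ∈ N₂∖N₁`. -/
def locw (a₁ a₂ m : ℕ) (x : ℝ) : ℝ :=
  Real.sqrt (2 ^ a₂) *
    Set.indicator (Set.Ico ((m : ℝ) / 2 ^ a₂) (((m : ℝ) + 1) / 2 ^ a₂)) (fun _ => (1:ℝ)) x *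
    walsh (2 ^ a₁ + 2 ^ a₂) x

/-- The twice cumulated function `W̃_{k,m,2}`. -/
def Wtil (a₁ a₂ m : ℕ) (x : ℝ) : ℝ :=
  ∫ y in (0:ℝ)..x, ∫ t in (0:ℝ)..y, locw a₁ a₂ m t

/-- The Gaussian probability density with mean `0` and standard deviation `σ`. -/
def gpdf (σ x : ℝ) : ℝ :=
  (Real.sqrt (2 * Real.pi) * σ)⁻¹ * Real.exp (-(x ^ 2) / (2 * σ ^ 2))

/-- The Gaussian cumulative distribution function `Φ_σ`. -/
def gcdf (σ x : ℝ) : ℝ := ∫ t in Set.Iic x, gpdf σ t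

lemma locw_zero (a₁ a₂ m : ℕ) (x : ℝ)
    (hx : x ∉ Set.Ico ((m : ℝ) / 2 ^ a₂) (((m : ℝ) + 1) / 2 ^ a₂)) : locw a₁ a₂ m x = 0 := by
  unfold locw
  rw [Set.indicator_of_notMem hx]
  ring

lemma size_eq (a₁ a₂ : ℕ) (h : a₂ < a₁) : Nat.size (2^a₁ + 2^a₂) = a₁ + 1 := by
  apply le_antisymm
  · rw [Nat.size_le]
    have : (2:ℕ)^a₂ < 2^a₁ := Nat.pow_lt_pow_right one_lt_two h
    calc 2^a₁ + 2^a₂ < 2^a₁ + 2^a₁ := by omega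
    _ = 2^(a₁+1) := by ring
  · rw [Nat.succ_le_iff, Nat.lt_size]; exact Nat.le_add_right _ _

lemma pow_sub_mod (i b : ℕ) (hb : i < b) : (2:ℕ)^(b-i) % 2 = 0 := by
  rcases Nat.exists_eq_succ_of_ne_zero (by omega : b - i ≠ 0) with ⟨t, ht⟩
  rw [ht, pow_succ, Nat.mul_mod_left]

lemma bit_eq (a₁ a₂ : ℕ) (h : a₂ < a₁) (i : ℕ) :
    ((2^a₁ + 2^a₂ : ℕ).testBit i).toNat
      = (if i = a₁ then 1 else 0) + (if i = a₂ then 1 else 0) := by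
  rw [Nat.toNat_testBit]
  rcases le_or_gt i a₂ with hi | hi
  · have e1 : (2:ℕ)^a₁ + 2^a₂ = 2^i * (2^(a₁-i) + 2^(a₂-i)) := by
      rw [Nat.mul_add, ← pow_add, ← pow_add]
      congr 2 <;> omega
    rw [e1, Nat.mul_div_cancel_left _ (Nat.two_pow_pos _)]
    rcases eq_or_lt_of_le hi with hi' | hi2
    · subst hi'
      have h1 : i ≠ a₁ := by omega
      simp only [Nat.sub_self, pow_zero, if_neg h1, if_pos rfl]
      rw [Nat.add_mod, pow_sub_mod i a₁ h]
      simp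
    · rw [Nat.add_mod, pow_sub_mod i a₁ (by omega), pow_sub_mod i a₂ hi2]
      have h1 : i ≠ a₁ := by omega
      have h2 : i ≠ a₂ := by omega
      simp [h1, h2]
  · rcases le_or_gt i a₁ with hi1 | hi1
    · have e1 : (2:ℕ)^a₁ + 2^a₂ = 2^i * 2^(a₁-i) + 2^a₂ := by
        rw [← pow_add]; congr 2; omega
      rw [e1, Nat.mul_add_div (Nat.two_pow_pos _),
        Nat.div_eq_of_lt (Nat.pow_lt_pow_right one_lt_two hi), Nat.add_zero]
      have h2 : i ≠ a₂ := by omega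
      rcases eq_or_lt_of_le hi1 with hi' | hi2
      · subst hi'
        simp [h2]
      · rw [pow_sub_mod i a₁ hi2]
        have h1 : i ≠ a₁ := by omega
        simp [h1, h2]
    · have : (2:ℕ)^a₁ + 2^a₂ < 2^i := by
        have h1 : (2:ℕ)^a₂ < 2^a₁ := Nat.pow_lt_pow_right one_lt_two h
        have h2 : (2:ℕ)^(a₁+1) ≤ 2^i := Nat.pow_le_pow_right (by norm_num) (by omega)
        have : (2:ℕ)^(a₁+1) = 2^a₁ + 2^a₁ := by ring
        omega
      rw [Nat.div_eq_of_lt this]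
      have h1 : i ≠ a₁ := by omega
      have h2 : i ≠ a₂ := by omega
      simp [h1, h2]

lemma walsh_eq (a₁ a₂ : ℕ) (h : a₂ < a₁) (x : ℝ) :
    walsh (2^a₁ + 2^a₂) x = (-1)^(rdigit x a₁) * (-1)^(rdigit x a₂) := by
  unfold walsh
  rw [size_eq a₁ a₂ h, ← pow_add]
  congr 1
  have : ∀ i ∈ Finset.range (a₁+1), ((2^a₁ + 2^a₂ : ℕ).testBit i).toNat * rdigit x i
      = (if i = a₁ then rdigit x a₁ else 0) + (if i = a₂ then rdigit x a₂ else 0) := by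
    intro i _
    rw [bit_eq a₁ a₂ h, Nat.add_mul]
    congr 1 <;> split <;> simp_all
  rw [Finset.sum_congr rfl this, Finset.sum_add_distrib,
    Finset.sum_ite_eq' _ a₁, Finset.sum_ite_eq' _ a₂]
  simp [Finset.mem_range, Nat.lt_succ_iff, h.le]

/-- step length -/
def hh (a₁ : ℕ) : ℝ := ((2:ℝ)^(a₁+1))⁻¹
/-- value of `locw` on block `j` -/
def cc (a₁ a₂ m j : ℕ) : ℝ :=
  Real.sqrt (2^a₂) * (if j / 2^(a₁+1-a₂) = m then (1:ℝ) else 0) *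
    ((-1)^j * (-1)^(j / 2^(a₁-a₂)))

lemma hh_pos (a₁ : ℕ) : 0 < hh a₁ := by unfold hh; positivity

lemma neg_one_pow_mod (n : ℕ) : ((-1:ℝ))^(n % 2) = (-1)^n := by
  conv_rhs => rw [← Nat.div_add_mod n 2]
  rw [pow_add, pow_mul, neg_one_sq, one_pow, one_mul]

lemma floor_scale (a₁ s j : ℕ) (hs : s ≤ a₁ + 1) (y : ℝ)
    (hy1 : j * hh a₁ ≤ y) (hy2 : y < (j+1) * hh a₁) :
    ⌊y * 2^s⌋ = (j / 2^(a₁+1-s) : ℕ) := by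
  set e := a₁ + 1 - s with he
  set q : ℕ := j / 2^e with hq
  have hP : (2:ℝ)^(a₁+1) = 2^e * 2^s := by
    rw [← pow_add]; congr 1; omega
  have hps : (0:ℝ) < 2^s := by positivity
  have hpp : (0:ℝ) < 2^e := by positivity
  have hup : j + 1 ≤ (q + 1) * 2^e := by
    have e1 : 2^e * q + j % 2^e = j := Nat.div_add_mod j (2^e)
    have e2 : j % 2^e < 2^e := Nat.mod_lt _ (Nat.two_pow_pos _)
    calc j + 1 = 2^e * q + j % 2^e + 1 := by rw [e1]
    _ ≤ 2^e * q + 2^e := by omega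
    _ = (q + 1) * 2^e := by ring
  have hdn : q * 2^e ≤ j := Nat.div_mul_le_self j (2^e)
  rw [Int.floor_eq_iff]
  constructor
  · push_cast
    calc (q:ℝ) ≤ (j:ℝ) / 2^e := by
          rw [le_div_iff₀ hpp]; exact_mod_cast Nat.cast_le.mpr hdn
    _ ≤ y * 2^s := by
          rw [div_le_iff₀ hpp]
          calc (j:ℝ) = j * hh a₁ * 2^(a₁+1) := by
                unfold hh; field_simp
          _ ≤ y * 2^(a₁+1) := mul_le_mul_of_nonneg_right hy1 (by positivity)
          _ = y * 2^s * 2^e := by rw [hP]; ring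
  · push_cast
    calc y * 2^s < (j+1) * hh a₁ * 2^s := mul_lt_mul_of_pos_right hy2 hps
    _ = ((j:ℝ)+1) / 2^e := by
          unfold hh; rw [hP]; field_simp
    _ ≤ ((q:ℝ) + 1) := by
          rw [div_le_iff₀ hpp]
          exact_mod_cast Nat.cast_le.mpr hup

lemma rdigit_block (a₁ b j : ℕ) (hb : b ≤ a₁) (y : ℝ)
    (hy1 : j * hh a₁ ≤ y) (hy2 : y < (j+1) * hh a₁) :
    rdigit y b = j / 2^(a₁ - b) % 2 := by
  unfold rdigit
  rw [floor_scale a₁ (b+1) j (by omega) y hy1 hy2]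
  have : a₁ + 1 - (b + 1) = a₁ - b := by omega
  rw [this, Int.toNat_natCast]

lemma mem_Ico_iff_floor (a₂ m : ℕ) (y : ℝ) :
    y ∈ Set.Ico ((m : ℝ) / 2 ^ a₂) (((m : ℝ) + 1) / 2 ^ a₂) ↔ ⌊y * 2^a₂⌋ = m := by
  have hps : (0:ℝ) < 2^a₂ := by positivity
  rw [Set.mem_Ico, div_le_iff₀ hps, lt_div_iff₀ hps, Int.floor_eq_iff]
  push_cast
  tauto

lemma indicator_block (a₁ a₂ m j : ℕ) (h : a₂ < a₁) (y : ℝ)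
    (hy1 : j * hh a₁ ≤ y) (hy2 : y < (j+1) * hh a₁) :
    Set.indicator (Set.Ico ((m : ℝ) / 2 ^ a₂) (((m : ℝ) + 1) / 2 ^ a₂)) (fun _ => (1:ℝ)) y
      = (if j / 2^(a₁+1-a₂) = m then (1:ℝ) else 0) := by
  have hfl := floor_scale a₁ a₂ j (by omega) y hy1 hy2
  by_cases hc : j / 2^(a₁+1-a₂) = m
  · rw [if_pos hc, Set.indicator_of_mem]
    rw [mem_Ico_iff_floor, hfl, hc]
  · rw [if_neg hc, Set.indicator_of_notMem]
    rw [mem_Ico_iff_floor, hfl]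
    intro hcon
    exact hc (by exact_mod_cast hcon)

lemma locw_block (a₁ a₂ m j : ℕ) (h : a₂ < a₁) (y : ℝ)
    (hy1 : j * hh a₁ ≤ y) (hy2 : y < (j+1) * hh a₁) :
    locw a₁ a₂ m y = cc a₁ a₂ m j := by
  unfold locw cc
  rw [walsh_eq a₁ a₂ h, indicator_block a₁ a₂ m j h y hy1 hy2,
    rdigit_block a₁ a₁ j le_rfl y hy1 hy2, rdigit_block a₁ a₂ j h.le y hy1 hy2,
    Nat.sub_self, pow_zero, Nat.div_one, neg_one_pow_mod, neg_one_pow_mod]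

def Wf (a₁ a₂ m : ℕ) (y : ℝ) : ℝ := ∫ t in (0:ℝ)..y, locw a₁ a₂ m t
def SS (a₁ a₂ m j : ℕ) : ℝ := ∑ i ∈ Finset.range j, cc a₁ a₂ m i

lemma walsh_measurable (k : ℕ) : Measurable (walsh k) := by
  unfold walsh
  have hsum : Measurable fun x : ℝ => ∑ i ∈ Finset.range (Nat.size k),
      (Nat.testBit k i).toNat * rdigit x i := by
    apply Finset.measurable_sum
    intro i _
    have hfl : Measurable fun x : ℝ => ⌊x * 2 ^ (i + 1)⌋ :=
      Measurable.floor (measurable_id.mul_const _)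
    exact (measurable_from_top (f := fun z : ℤ =>
      (Nat.testBit k i).toNat * (z.toNat % 2))).comp hfl
  exact (measurable_from_top (f := fun n : ℕ => ((-1:ℝ))^n)).comp hsum

lemma locw_measurable (a₁ a₂ m : ℕ) : Measurable (locw a₁ a₂ m) := by
  unfold locw
  exact ((measurable_const.mul
    ((measurable_const.indicator measurableSet_Ico))).mul (walsh_measurable _))

lemma walsh_abs (k : ℕ) (x : ℝ) : |walsh k x| = 1 := by
  unfold walsh; rw [abs_pow, abs_neg, abs_one, one_pow]

lemma locw_abs_le (a₁ a₂ m : ℕ) (x : ℝ) : |locw a₁ a₂ m x| ≤ Real.sqrt (2^a₂) := by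
  unfold locw
  rw [abs_mul, abs_mul, walsh_abs, mul_one, abs_of_nonneg (Real.sqrt_nonneg _)]
  have : |Set.indicator (Set.Ico ((m : ℝ) / 2 ^ a₂) (((m : ℝ) + 1) / 2 ^ a₂))
      (fun _ => (1:ℝ)) x| ≤ 1 := by
    rw [Set.indicator_apply]; split <;> simp
  calc Real.sqrt (2^a₂) * |_| ≤ Real.sqrt (2^a₂) * 1 :=
        mul_le_mul_of_nonneg_left this (Real.sqrt_nonneg _)
  _ = _ := mul_one _

lemma locw_ii (a₁ a₂ m : ℕ) (a b : ℝ) : IntervalIntegrable (locw a₁ a₂ m) volume a b := by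
  constructor <;>
  · apply Measure.integrableOn_of_bounded (M := Real.sqrt (2^a₂))
    · exact (measure_Ioc_lt_top).ne
    · exact (locw_measurable a₁ a₂ m).aestronglyMeasurable
    · exact Filter.Eventually.of_forall fun y => by
        rw [Real.norm_eq_abs]; exact locw_abs_le a₁ a₂ m y

lemma int_block (a₁ a₂ m j : ℕ) (h : a₂ < a₁) (y : ℝ)
    (hy1 : j * hh a₁ ≤ y) (hy2 : y ≤ (j+1) * hh a₁) :
    ∫ t in (j * hh a₁)..y, locw a₁ a₂ m t = cc a₁ a₂ m j * (y - j * hh a₁) := by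
  rw [intervalIntegral.integral_of_le hy1, integral_Ioc_eq_integral_Ioo,
    setIntegral_congr_fun measurableSet_Ioo
      (fun t ht => locw_block a₁ a₂ m j h t ht.1.le (lt_of_lt_of_le ht.2 hy2)),
    setIntegral_const, Real.volume_real_Ioo_of_le hy1, smul_eq_mul,
    mul_comm]

lemma Wf_grid (a₁ a₂ m : ℕ) (h : a₂ < a₁) (j : ℕ) :
    Wf a₁ a₂ m (j * hh a₁) = hh a₁ * SS a₁ a₂ m j := by
  induction j with
  | zero => simp [Wf, SS]
  | succ j ih =>
    have key : Wf a₁ a₂ m ((j+1 : ℕ) * hh a₁)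
        = Wf a₁ a₂ m (j * hh a₁) + ∫ t in (j * hh a₁)..((j+1:ℕ) * hh a₁), locw a₁ a₂ m t := by
      unfold Wf
      rw [intervalIntegral.integral_add_adjacent_intervals (locw_ii a₁ a₂ m _ _)
        (locw_ii a₁ a₂ m _ _)]
    push_cast at key ⊢
    have hb := int_block a₁ a₂ m j h (((j:ℝ)+1) * hh a₁)
      (by have := hh_pos a₁; nlinarith) le_rfl
    rw [key, ih, hb, SS, SS, Finset.sum_range_succ]
    ring

lemma Wf_formula (a₁ a₂ m j : ℕ) (h : a₂ < a₁) (y : ℝ)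
    (hy1 : j * hh a₁ ≤ y) (hy2 : y ≤ (j+1) * hh a₁) :
    Wf a₁ a₂ m y = hh a₁ * SS a₁ a₂ m j + cc a₁ a₂ m j * (y - j * hh a₁) := by
  have key : Wf a₁ a₂ m y
      = Wf a₁ a₂ m (j * hh a₁) + ∫ t in (j * hh a₁)..y, locw a₁ a₂ m t := by
    unfold Wf
    rw [intervalIntegral.integral_add_adjacent_intervals (locw_ii a₁ a₂ m _ _)
      (locw_ii a₁ a₂ m _ _)]
  rw [key, Wf_grid a₁ a₂ m h, int_block a₁ a₂ m j h y hy1 hy2]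

lemma div_two_pow (i e : ℕ) (he : 1 ≤ e) :
    (2*i) / 2^e = i / 2^(e-1) ∧ (2*i+1) / 2^e = i / 2^(e-1) := by
  have h2 : (2:ℕ)^e = 2 * 2^(e-1) := by
    conv_lhs => rw [show e = 1 + (e-1) by omega]
    rw [pow_add, pow_one]
  constructor
  · rw [h2, Nat.mul_div_mul_left _ _ two_pos]
  · rw [h2, ← Nat.div_div_eq_div_mul]
    congr 1
    omega

lemma cc_odd (a₁ a₂ m : ℕ) (h : a₂ < a₁) (i : ℕ) :
    cc a₁ a₂ m (2*i+1) = - cc a₁ a₂ m (2*i) := by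
  unfold cc
  rw [(div_two_pow i (a₁+1-a₂) (by omega)).1, (div_two_pow i (a₁+1-a₂) (by omega)).2,
    (div_two_pow i (a₁-a₂) (by omega)).1, (div_two_pow i (a₁-a₂) (by omega)).2]
  have : (-1:ℝ)^(2*i+1) = -((-1:ℝ)^(2*i)) := by rw [pow_succ]; ring
  rw [this]; ring

lemma SS_even (a₁ a₂ m : ℕ) (h : a₂ < a₁) (i : ℕ) : SS a₁ a₂ m (2*i) = 0 := by
  induction i with
  | zero => simp [SS]
  | succ i ih =>
    have : 2*(i+1) = (2*i+1)+1 := by ring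
    rw [this, SS, Finset.sum_range_succ, Finset.sum_range_succ, ← SS, ih,
      cc_odd a₁ a₂ m h i]
    ring

lemma SS_odd (a₁ a₂ m : ℕ) (h : a₂ < a₁) (i : ℕ) :
    SS a₁ a₂ m (2*i+1) = - cc a₁ a₂ m (2*i+1) := by
  rw [SS, Finset.sum_range_succ, ← SS, SS_even a₁ a₂ m h, cc_odd a₁ a₂ m h]
  ring

lemma cc_abs (a₁ a₂ m j : ℕ) : |cc a₁ a₂ m j| ≤ Real.sqrt (2^a₂) := by
  unfold cc
  have h1 : |(-1:ℝ)^j * (-1:ℝ)^(j / 2^(a₁-a₂))| = 1 := by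
    rw [abs_mul, abs_pow, abs_pow, abs_neg, abs_one, one_pow, one_pow, mul_one]
  rw [abs_mul, h1, mul_one, abs_mul, abs_of_nonneg (Real.sqrt_nonneg _)]
  have h2 : |if j / 2^(a₁+1-a₂) = m then (1:ℝ) else 0| ≤ 1 := by
    split <;> simp
  calc Real.sqrt (2^a₂) * |if j / 2^(a₁+1-a₂) = m then (1:ℝ) else 0|
      ≤ Real.sqrt (2^a₂) * 1 := mul_le_mul_of_nonneg_left h2 (Real.sqrt_nonneg _)
  _ = _ := mul_one _

lemma Wf_bound (a₁ a₂ m : ℕ) (h : a₂ < a₁) (y : ℝ) (hy : 0 ≤ y) :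
    |Wf a₁ a₂ m y| ≤ Real.sqrt (2^a₂) * hh a₁ := by
  set j : ℕ := (⌊y / hh a₁⌋).toNat with hj
  have h0 : (0:ℝ) ≤ y / hh a₁ := div_nonneg hy (hh_pos a₁).le
  have h3 : (0:ℤ) ≤ ⌊y / hh a₁⌋ := Int.floor_nonneg.mpr h0
  have h4' : (j:ℤ) = ⌊y / hh a₁⌋ := Int.toNat_of_nonneg h3
  have h4 : ((j:ℝ)) = ((⌊y / hh a₁⌋ : ℤ) : ℝ) := by rw [← h4']; norm_cast
  have hf1 : (j : ℝ) ≤ y / hh a₁ := by rw [h4]; exact Int.floor_le _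
  have hf2 : y / hh a₁ < (j:ℝ) + 1 := by rw [h4]; exact Int.lt_floor_add_one _
  have hy1 : (j:ℝ) * hh a₁ ≤ y := by
    rw [← le_div_iff₀ (hh_pos a₁)]; exact hf1
  have hy2 : y ≤ ((j:ℝ)+1) * hh a₁ := by
    rw [← div_le_iff₀ (hh_pos a₁)]; exact hf2.le
  have hhp := hh_pos a₁
  rw [Wf_formula a₁ a₂ m j h y hy1 hy2]
  rcases Nat.even_or_odd j with ⟨i, hi⟩ | ⟨i, hi⟩
  · rw [show j = 2*i by omega, SS_even a₁ a₂ m h, mul_zero, zero_add, abs_mul]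
    have hji : ((2*i : ℕ):ℝ) = (j:ℝ) := by rw [show j = 2*i by omega]
    have h1 : |y - ((2*i:ℕ):ℝ) * hh a₁| ≤ hh a₁ := by
      rw [hji, abs_le]
      constructor
      · linarith
      · linarith
    exact mul_le_mul (cc_abs a₁ a₂ m _) h1 (abs_nonneg _) (Real.sqrt_nonneg _)
  · rw [show j = 2*i+1 by omega, SS_odd a₁ a₂ m h]
    have heq : hh a₁ * -cc a₁ a₂ m (2*i+1)
          + cc a₁ a₂ m (2*i+1) * (y - ((2*i+1:ℕ):ℝ) * hh a₁)
        = cc a₁ a₂ m (2*i+1) * (y - ((2*i+1:ℕ):ℝ) * hh a₁ - hh a₁) := by ring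
    rw [heq, abs_mul]
    have hji : ((2*i+1:ℕ):ℝ) = (j:ℝ) := by rw [show j = 2*i+1 by omega]
    have h1 : |y - ((2*i+1:ℕ):ℝ) * hh a₁ - hh a₁| ≤ hh a₁ := by
      rw [hji, abs_le]
      constructor
      · linarith
      · linarith
    exact mul_le_mul (cc_abs a₁ a₂ m _) h1 (abs_nonneg _) (Real.sqrt_nonneg _)

lemma locw_zero_lt (a₁ a₂ m : ℕ) (x : ℝ) (hx : x < (m:ℝ) / 2^a₂) : locw a₁ a₂ m x = 0 :=
  locw_zero a₁ a₂ m x (fun hmem => absurd hmem.1 (not_le.mpr hx))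

lemma locw_zero_ge (a₁ a₂ m : ℕ) (x : ℝ) (hx : ((m:ℝ)+1) / 2^a₂ ≤ x) : locw a₁ a₂ m x = 0 :=
  locw_zero a₁ a₂ m x (fun hmem => absurd hmem.2 (not_lt.mpr hx))

lemma grid_L (a₁ a₂ m : ℕ) (h : a₂ < a₁) :
    ((m * 2^(a₁+1-a₂) : ℕ) : ℝ) * hh a₁ = (m:ℝ) / 2^a₂ := by
  have hP : (2:ℝ)^(a₁+1) = 2^(a₁+1-a₂) * 2^a₂ := by rw [← pow_add]; congr 1; omega
  unfold hh; rw [hP]; push_cast; field_simp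

lemma grid_R (a₁ a₂ m : ℕ) (h : a₂ < a₁) :
    (((m+1) * 2^(a₁+1-a₂) : ℕ) : ℝ) * hh a₁ = ((m:ℝ)+1) / 2^a₂ := by
  have hP : (2:ℝ)^(a₁+1) = 2^(a₁+1-a₂) * 2^a₂ := by rw [← pow_add]; congr 1; omega
  unfold hh; rw [hP]; push_cast; field_simp

lemma L_nonneg (a₂ m : ℕ) : (0:ℝ) ≤ (m:ℝ) / 2^a₂ := by positivity

lemma R_le_one (a₂ m : ℕ) (hm : m < 2^a₂) : ((m:ℝ)+1) / 2^a₂ ≤ 1 := by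
  rw [div_le_one (by positivity)]
  exact_mod_cast Nat.cast_le.mpr hm

lemma Wf_zero_left (a₁ a₂ m : ℕ) (y : ℝ) (hy : y ≤ (m:ℝ) / 2^a₂) :
    Wf a₁ a₂ m y = 0 := by
  unfold Wf
  rcases le_or_gt 0 y with h0 | h0
  · rw [intervalIntegral.integral_of_le h0, integral_Ioc_eq_integral_Ioo,
      setIntegral_congr_fun measurableSet_Ioo
        (fun t ht => locw_zero_lt a₁ a₂ m t (lt_of_lt_of_le ht.2 hy)), integral_zero]
  · rw [intervalIntegral.integral_of_ge h0.le, integral_Ioc_eq_integral_Ioo,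
      setIntegral_congr_fun measurableSet_Ioo
        (fun t ht => locw_zero_lt a₁ a₂ m t
          (lt_of_lt_of_le ht.2 (le_trans (L_nonneg a₂ m) le_rfl))), integral_zero, neg_zero]

lemma Wf_R_zero (a₁ a₂ m : ℕ) (h : a₂ < a₁) :
    Wf a₁ a₂ m (((m:ℝ)+1) / 2^a₂) = 0 := by
  have he : 1 ≤ a₁ + 1 - a₂ := by omega
  have hsplit : (m+1) * 2^(a₁+1-a₂) = 2 * ((m+1) * 2^(a₁+1-a₂-1)) := by
    conv_lhs => rw [show a₁+1-a₂ = 1 + (a₁+1-a₂-1) by omega]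
    ring
  rw [← grid_R a₁ a₂ m h, hsplit]
  rw [Wf_grid a₁ a₂ m h, SS_even a₁ a₂ m h]
  ring

lemma Wf_zero_right (a₁ a₂ m : ℕ) (h : a₂ < a₁) (y : ℝ) (hy : ((m:ℝ)+1) / 2^a₂ ≤ y) :
    Wf a₁ a₂ m y = 0 := by
  have key : Wf a₁ a₂ m y = Wf a₁ a₂ m (((m:ℝ)+1) / 2^a₂)
      + ∫ t in (((m:ℝ)+1) / 2^a₂)..y, locw a₁ a₂ m t := by
    unfold Wf
    rw [intervalIntegral.integral_add_adjacent_intervals (locw_ii a₁ a₂ m _ _)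
      (locw_ii a₁ a₂ m _ _)]
  rw [key, Wf_R_zero a₁ a₂ m h, zero_add, intervalIntegral.integral_of_le hy,
    setIntegral_congr_fun measurableSet_Ioc
      (fun t ht => locw_zero_ge a₁ a₂ m t ht.1.le), integral_zero]

lemma Wf_cont (a₁ a₂ m : ℕ) : Continuous (Wf a₁ a₂ m) :=
  intervalIntegral.continuous_primitive (locw_ii a₁ a₂ m) 0

lemma Wf_ii (a₁ a₂ m : ℕ) (a b : ℝ) : IntervalIntegrable (Wf a₁ a₂ m) volume a b :=
  (Wf_cont a₁ a₂ m).intervalIntegrable a b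

lemma Wf_block_int (a₁ a₂ m j : ℕ) (h : a₂ < a₁) :
    ∫ y in ((j:ℝ) * hh a₁)..(((j:ℝ)+1) * hh a₁), Wf a₁ a₂ m y
      = hh a₁^2 * SS a₁ a₂ m j + cc a₁ a₂ m j * hh a₁^2 / 2 := by
  have hhp := hh_pos a₁
  have hle : (j:ℝ) * hh a₁ ≤ ((j:ℝ)+1) * hh a₁ := by nlinarith
  have heq : Set.EqOn (Wf a₁ a₂ m)
      (fun y => (hh a₁ * SS a₁ a₂ m j - cc a₁ a₂ m j * ((j:ℝ) * hh a₁))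
        + cc a₁ a₂ m j * y)
      (Set.uIcc ((j:ℝ) * hh a₁) (((j:ℝ)+1) * hh a₁)) := by
    intro y hy
    rw [Set.uIcc_of_le hle] at hy
    rw [Wf_formula a₁ a₂ m j h y hy.1 hy.2]
    ring
  rw [intervalIntegral.integral_congr heq,
    intervalIntegral.integral_add intervalIntegrable_const
      ((continuous_mul_left (cc a₁ a₂ m j)).intervalIntegrable _ _),
    intervalIntegral.integral_const, intervalIntegral.integral_const_mul, integral_id]
  simp only [smul_eq_mul]
  ring

lemma sum_pair (f : ℕ → ℝ) (n : ℕ) :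
    ∑ k ∈ Finset.range (2*n), f k = ∑ i ∈ Finset.range n, (f (2*i) + f (2*i+1)) := by
  induction n with
  | zero => simp
  | succ n ih =>
    rw [show 2*(n+1) = (2*n+1)+1 by ring, Finset.sum_range_succ, Finset.sum_range_succ,
      Finset.sum_range_succ, ih]
    ring

lemma sum_sign (d : ℕ) (hd : 1 ≤ d) :
    ∑ i ∈ Finset.range (2^d), ((-1:ℝ))^(i / 2^(d-1)) = 0 := by
  have h2 : (2:ℕ)^d = 2^(d-1) + 2^(d-1) := by
    conv_lhs => rw [show d = 1 + (d-1) by omega]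
    rw [pow_add, pow_one]; ring
  rw [Finset.range_eq_Ico, h2, ← Finset.sum_Ico_consecutive _ (Nat.zero_le _)
    (Nat.le_add_right _ _)]
  have e1 : ∑ i ∈ Finset.Ico 0 (2^(d-1)), ((-1:ℝ))^(i / 2^(d-1))
      = ∑ i ∈ Finset.Ico 0 (2^(d-1)), (1:ℝ) := by
    apply Finset.sum_congr rfl
    intro i hi
    rw [Finset.mem_Ico] at hi
    rw [Nat.div_eq_of_lt hi.2, pow_zero]
  have e2 : ∑ i ∈ Finset.Ico (2^(d-1)) (2^(d-1)+2^(d-1)), ((-1:ℝ))^(i / 2^(d-1))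
      = ∑ i ∈ Finset.Ico (2^(d-1)) (2^(d-1)+2^(d-1)), (-1:ℝ) := by
    apply Finset.sum_congr rfl
    intro i hi
    rw [Finset.mem_Ico] at hi
    have : i / 2^(d-1) = 1 := Nat.div_eq_of_lt_le (by omega) (by omega)
    rw [this, pow_one]
  rw [e1, e2, Finset.sum_const, Finset.sum_const, Nat.card_Ico, Nat.card_Ico]
  simp

lemma WfInt_LR (a₁ a₂ m : ℕ) (h : a₂ < a₁) :
    ∫ y in ((m:ℝ) / 2^a₂)..(((m:ℝ)+1) / 2^a₂), Wf a₁ a₂ m y = 0 := by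
  set e := a₁ + 1 - a₂ with he
  have he2 : 2 ≤ e := by omega
  set d := a₁ - a₂ with hd
  have hd1 : 1 ≤ d := by omega
  have hed : e = d + 1 := by omega
  set j₀ := m * 2^e with hj₀
  have hkey := intervalIntegral.sum_integral_adjacent_intervals
    (f := Wf a₁ a₂ m) (μ := volume) (a := fun k => ((j₀ + k : ℕ) : ℝ) * hh a₁)
    (n := 2^e) (fun k _ => Wf_ii a₁ a₂ m _ _)
  have ha0 : ((j₀ + 0 : ℕ) : ℝ) * hh a₁ = (m:ℝ) / 2^a₂ := by
    rw [Nat.add_zero, hj₀, he]; exact grid_L a₁ a₂ m h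
  have haN : ((j₀ + 2^e : ℕ) : ℝ) * hh a₁ = ((m:ℝ)+1) / 2^a₂ := by
    have : j₀ + 2^e = (m+1) * 2^e := by rw [hj₀]; ring
    rw [this, he]; exact grid_R a₁ a₂ m h
  rw [ha0, haN] at hkey
  rw [← hkey]
  have hterm : ∀ k : ℕ, ∫ y in (((j₀ + k : ℕ) : ℝ) * hh a₁)..(((j₀ + (k+1) : ℕ) : ℝ) * hh a₁),
      Wf a₁ a₂ m y = hh a₁^2 * SS a₁ a₂ m (j₀+k) + cc a₁ a₂ m (j₀+k) * hh a₁^2 / 2 := by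
    intro k
    have : ((j₀ + (k+1) : ℕ) : ℝ) = ((j₀ + k : ℕ) : ℝ) + 1 := by push_cast; ring
    rw [this, Wf_block_int a₁ a₂ m (j₀+k) h]
  calc ∑ k ∈ Finset.range (2^e), ∫ y in (((j₀ + k : ℕ) : ℝ) * hh a₁)..(((j₀ + (k+1) : ℕ) : ℝ) * hh a₁),
        Wf a₁ a₂ m y
      = ∑ k ∈ Finset.range (2^e),
          (hh a₁^2 * SS a₁ a₂ m (j₀+k) + cc a₁ a₂ m (j₀+k) * hh a₁^2 / 2) :=
        Finset.sum_congr rfl (fun k _ => hterm k)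
  _ = ∑ i ∈ Finset.range (2^d), hh a₁^2 * cc a₁ a₂ m (j₀+2*i) := by
      rw [show (2:ℕ)^e = 2 * 2^d by rw [hed]; ring]
      rw [sum_pair]
      apply Finset.sum_congr rfl
      intro i _
      have hrep : j₀ + 2*i = 2*(m * 2^d + i) := by rw [hj₀, hed]; ring
      have hrep1 : j₀ + (2*i+1) = 2*(m * 2^d + i) + 1 := by rw [hj₀, hed]; ring
      rw [hrep, hrep1, SS_even a₁ a₂ m h, SS_odd a₁ a₂ m h, cc_odd a₁ a₂ m h]
      ring
  _ = ∑ i ∈ Finset.range (2^d), hh a₁^2 * Real.sqrt (2^a₂) * ((-1:ℝ))^(i / 2^(d-1)) := by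
      apply Finset.sum_congr rfl
      intro i hi
      rw [Finset.mem_range] at hi
      have hccval : cc a₁ a₂ m (j₀+2*i) = Real.sqrt (2^a₂) * ((-1:ℝ))^(i / 2^(d-1)) := by
        unfold cc
        have h1 : (j₀ + 2*i) / 2^(a₁+1-a₂) = m := by
          rw [← he, hj₀, mul_comm m, Nat.mul_add_div (Nat.two_pow_pos _),
            Nat.div_eq_of_lt (by rw [hed]; omega)]
          omega
        have h2 : (-1:ℝ)^(j₀ + 2*i) = 1 := by
          have hpe : Even ((2:ℕ)^e) := (Nat.even_pow).mpr ⟨even_two, by omega⟩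
          have : Even (j₀ + 2*i) := (hpe.mul_left m).add ⟨i, two_mul i⟩
          exact this.neg_one_pow
        have h3 : (j₀ + 2*i) / 2^(a₁-a₂) = 2*m + i / 2^(d-1) := by
          rw [← hd]
          have : j₀ + 2*i = 2^d * (2*m) + 2*i := by rw [hj₀, hed]; ring
          rw [this, Nat.mul_add_div (Nat.two_pow_pos _),
            (div_two_pow i d hd1).1]
        have h4 : (-1:ℝ)^(2*m + i / 2^(d-1)) = ((-1:ℝ))^(i / 2^(d-1)) := by
          rw [pow_add, pow_mul, neg_one_sq, one_pow, one_mul]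
        rw [h1, h2, h3, h4, if_pos rfl]
        ring
      rw [hccval]; ring
  _ = hh a₁^2 * Real.sqrt (2^a₂) * ∑ i ∈ Finset.range (2^d), ((-1:ℝ))^(i / 2^(d-1)) := by
      rw [Finset.mul_sum]
  _ = 0 := by rw [sum_sign d hd1]; ring

def Wt (a₁ a₂ m : ℕ) (u : ℝ) : ℝ := ∫ y in (0:ℝ)..u, Wf a₁ a₂ m y

lemma Wt_split (a₁ a₂ m : ℕ) (a b : ℝ) :
    Wt a₁ a₂ m b = Wt a₁ a₂ m a + ∫ y in a..b, Wf a₁ a₂ m y := by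
  unfold Wt
  rw [intervalIntegral.integral_add_adjacent_intervals (Wf_ii a₁ a₂ m _ _)
    (Wf_ii a₁ a₂ m _ _)]

lemma Wt_left (a₁ a₂ m : ℕ) (u : ℝ) (h0 : 0 ≤ u) (hu : u ≤ (m:ℝ)/2^a₂) :
    Wt a₁ a₂ m u = 0 := by
  unfold Wt
  rw [intervalIntegral.integral_congr (g := fun _ => (0:ℝ))
    (fun y hy => by
      rw [Set.uIcc_of_le h0] at hy
      exact Wf_zero_left a₁ a₂ m y (le_trans hy.2 hu)),
    intervalIntegral.integral_const, smul_zero]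

lemma Wt_R (a₁ a₂ m : ℕ) (h : a₂ < a₁) : Wt a₁ a₂ m (((m:ℝ)+1)/2^a₂) = 0 := by
  rw [Wt_split a₁ a₂ m ((m:ℝ)/2^a₂), Wt_left a₁ a₂ m _ (L_nonneg a₂ m) le_rfl,
    WfInt_LR a₁ a₂ m h]
  ring

lemma Wt_right (a₁ a₂ m : ℕ) (h : a₂ < a₁) (u : ℝ) (hu : ((m:ℝ)+1)/2^a₂ ≤ u) :
    Wt a₁ a₂ m u = 0 := by
  rw [Wt_split a₁ a₂ m (((m:ℝ)+1)/2^a₂), Wt_R a₁ a₂ m h, zero_add,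
    intervalIntegral.integral_congr (g := fun _ => (0:ℝ))
      (fun y hy => by
        rw [Set.uIcc_of_le hu] at hy
        exact Wf_zero_right a₁ a₂ m h y hy.1),
    intervalIntegral.integral_const, smul_zero]

lemma Wt_mid1 (a₁ a₂ m : ℕ) (h : a₂ < a₁) (u : ℝ) (h1 : (m:ℝ)/2^a₂ ≤ u) :
    |Wt a₁ a₂ m u| ≤ Real.sqrt (2^a₂) * hh a₁ * (u - (m:ℝ)/2^a₂) := by
  rw [Wt_split a₁ a₂ m ((m:ℝ)/2^a₂), Wt_left a₁ a₂ m _ (L_nonneg a₂ m) le_rfl, zero_add]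
  have := intervalIntegral.norm_integral_le_of_norm_le_const
    (C := Real.sqrt (2^a₂) * hh a₁) (f := Wf a₁ a₂ m) (a := (m:ℝ)/2^a₂) (b := u)
    (fun y hy => by
      rw [Set.uIoc_of_le h1] at hy
      rw [Real.norm_eq_abs]
      exact Wf_bound a₁ a₂ m h y (le_trans (L_nonneg a₂ m) hy.1.le))
  rw [Real.norm_eq_abs, abs_of_nonneg (by linarith : (0:ℝ) ≤ u - (m:ℝ)/2^a₂)] at this
  exact this

lemma Wt_mid2 (a₁ a₂ m : ℕ) (h : a₂ < a₁) (u : ℝ) (h0 : 0 ≤ u)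
    (h2 : u ≤ ((m:ℝ)+1)/2^a₂) :
    |Wt a₁ a₂ m u| ≤ Real.sqrt (2^a₂) * hh a₁ * (((m:ℝ)+1)/2^a₂ - u) := by
  have hsplit := Wt_split a₁ a₂ m u (((m:ℝ)+1)/2^a₂)
  rw [Wt_R a₁ a₂ m h] at hsplit
  have : Wt a₁ a₂ m u = - ∫ y in u..(((m:ℝ)+1)/2^a₂), Wf a₁ a₂ m y := by linarith
  rw [this, abs_neg]
  have hb := intervalIntegral.norm_integral_le_of_norm_le_const
    (C := Real.sqrt (2^a₂) * hh a₁) (f := Wf a₁ a₂ m) (a := u) (b := ((m:ℝ)+1)/2^a₂)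
    (fun y hy => by
      rw [Set.uIoc_of_le h2] at hy
      rw [Real.norm_eq_abs]
      exact Wf_bound a₁ a₂ m h y (le_trans h0 hy.1.le))
  rw [Real.norm_eq_abs, abs_of_nonneg (by linarith : (0:ℝ) ≤ ((m:ℝ)+1)/2^a₂ - u)] at hb
  exact hb

lemma Wt_master (a₁ a₂ m : ℕ) (h : a₂ < a₁) (hm : m < 2^a₂) (u : ℝ)
    (h0 : 0 ≤ u) (h1 : u ≤ 1) :
    |Wt a₁ a₂ m u| ≤ Real.sqrt (2^a₂) * hh a₁ * min u (1-u) ∧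
    |Wt a₁ a₂ m u| ≤ Real.sqrt (2^a₂) * hh a₁ * ((2:ℝ)^(a₂+1))⁻¹ := by
  set C := Real.sqrt (2^a₂) * hh a₁ with hC
  have hCpos : 0 ≤ C := by
    apply mul_nonneg (Real.sqrt_nonneg _) (hh_pos a₁).le
  set L := (m:ℝ)/2^a₂ with hL
  set R := ((m:ℝ)+1)/2^a₂ with hR
  have hRL : R - L = ((2:ℝ)^a₂)⁻¹ := by rw [hR, hL]; field_simp; ring
  have hR1 : R ≤ 1 := R_le_one a₂ m hm
  have hL0 : 0 ≤ L := L_nonneg a₂ m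
  have hhalf : ((2:ℝ)^(a₂+1))⁻¹ = ((2:ℝ)^a₂)⁻¹ / 2 := by
    rw [pow_succ]; field_simp
  rcases le_or_gt u L with hcase | hcase
  · rw [Wt_left a₁ a₂ m u h0 hcase, abs_zero]
    exact ⟨mul_nonneg hCpos (le_min (by linarith) (by linarith)),
      mul_nonneg hCpos (by positivity)⟩
  rcases le_or_gt R u with hcase2 | hcase2
  · rw [Wt_right a₁ a₂ m h u hcase2, abs_zero]
    exact ⟨mul_nonneg hCpos (le_min (by linarith) (by linarith)),
      mul_nonneg hCpos (by positivity)⟩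
  · have hb1 := Wt_mid1 a₁ a₂ m h u hcase.le
    have hb2 := Wt_mid2 a₁ a₂ m h u h0 hcase2.le
    constructor
    · rcases le_total u (1-u) with hmin | hmin
      · rw [min_eq_left hmin]
        calc |Wt a₁ a₂ m u| ≤ C * (u - L) := hb1
        _ ≤ C * u := by apply mul_le_mul_of_nonneg_left _ hCpos; linarith
      · rw [min_eq_right hmin]
        calc |Wt a₁ a₂ m u| ≤ C * (R - u) := hb2
        _ ≤ C * (1-u) := by apply mul_le_mul_of_nonneg_left _ hCpos; linarith
    · rcases le_total (u - L) (R - u) with hmin | hmin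
      · calc |Wt a₁ a₂ m u| ≤ C * (u - L) := hb1
        _ ≤ C * ((2:ℝ)^(a₂+1))⁻¹ := by
            apply mul_le_mul_of_nonneg_left _ hCpos
            rw [hhalf]; linarith
      · calc |Wt a₁ a₂ m u| ≤ C * (R - u) := hb2
        _ ≤ C * ((2:ℝ)^(a₂+1))⁻¹ := by
            apply mul_le_mul_of_nonneg_left _ hCpos
            rw [hhalf]; linarith

variable {σ : ℝ}

lemma gpdf_pos (hσ : 0 < σ) (x : ℝ) : 0 < gpdf σ x := by
  unfold gpdf
  have h2π : 0 < Real.sqrt (2 * Real.pi) := Real.sqrt_pos.mpr (by positivity)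
  positivity

lemma gpdf_eq (σ x : ℝ) :
    gpdf σ x = (Real.sqrt (2 * Real.pi) * σ)⁻¹ * Real.exp (-((2 * σ ^ 2)⁻¹) * x ^ 2) := by
  unfold gpdf
  congr 2
  ring

lemma gpdf_integrable (hσ : 0 < σ) : Integrable (gpdf σ) := by
  have : Integrable (fun x => Real.exp (-((2 * σ ^ 2)⁻¹) * x ^ 2)) :=
    integrable_exp_neg_mul_sq (by positivity)
  have h := this.const_mul ((Real.sqrt (2 * Real.pi) * σ)⁻¹)
  apply h.congr
  filter_upwards with x
  rw [gpdf_eq]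

lemma sqrt_two_pi_sigma (hσ : 0 < σ) :
    Real.sqrt (Real.pi / (2 * σ ^ 2)⁻¹) = Real.sqrt (2 * Real.pi) * σ := by
  rw [div_eq_mul_inv, inv_inv, show Real.pi * (2 * σ^2) = (2 * Real.pi) * σ^2 by ring,
    Real.sqrt_mul (by positivity), Real.sqrt_sq hσ.le]

lemma integral_gpdf (hσ : 0 < σ) : ∫ x, gpdf σ x = 1 := by
  have key : ∫ x, gpdf σ x
      = (Real.sqrt (2 * Real.pi) * σ)⁻¹ * ∫ x, Real.exp (-((2 * σ ^ 2)⁻¹) * x ^ 2) := by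
    rw [← integral_const_mul]
    congr 1
    funext x
    rw [gpdf_eq]
  rw [key, integral_gaussian, sqrt_two_pi_sigma hσ]
  have : Real.sqrt (2 * Real.pi) * σ ≠ 0 := by
    have h2π : 0 < Real.sqrt (2 * Real.pi) := Real.sqrt_pos.mpr (by positivity)
    positivity
  field_simp

lemma integral_gpdf_Ioi (hσ : 0 < σ) : ∫ x in Set.Ioi (0:ℝ), gpdf σ x = 1/2 := by
  have key : ∫ x in Set.Ioi (0:ℝ), gpdf σ x
      = (Real.sqrt (2 * Real.pi) * σ)⁻¹
        * ∫ x in Set.Ioi (0:ℝ), Real.exp (-((2 * σ ^ 2)⁻¹) * x ^ 2) := by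
    rw [← integral_const_mul]
    congr 1
    funext x
    rw [gpdf_eq]
  rw [key, integral_gaussian_Ioi, sqrt_two_pi_sigma hσ]
  have : Real.sqrt (2 * Real.pi) * σ ≠ 0 := by
    have h2π : 0 < Real.sqrt (2 * Real.pi) := Real.sqrt_pos.mpr (by positivity)
    positivity
  field_simp

lemma gcdf_compl (hσ : 0 < σ) (x : ℝ) :
    1 - gcdf σ x = ∫ t in Set.Ioi x, gpdf σ t := by
  have := integral_add_compl (measurableSet_Iic (a := x)) (gpdf_integrable hσ)
  rw [Set.compl_Iic] at this
  rw [← integral_gpdf hσ, ← this]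
  unfold gcdf
  ring

lemma gcdf_zero (hσ : 0 < σ) : gcdf σ 0 = 1/2 := by
  have h := gcdf_compl hσ 0
  rw [integral_gpdf_Ioi hσ] at h
  linarith

lemma gcdf_nonneg (hσ : 0 < σ) (x : ℝ) : 0 ≤ gcdf σ x :=
  setIntegral_nonneg measurableSet_Iic (fun t _ => (gpdf_pos hσ t).le)

lemma gcdf_le_one (hσ : 0 < σ) (x : ℝ) : gcdf σ x ≤ 1 := by
  rw [← integral_gpdf hσ]
  exact setIntegral_le_integral (gpdf_integrable hσ)
    (Filter.Eventually.of_forall (fun t => (gpdf_pos hσ t).le))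

lemma gpdf_shift_le (hσ : 0 < σ) (x t : ℝ) (hxt : 0 ≤ x * (t - x)) :
    gpdf σ t ≤ Real.exp (-(x^2) / (2*σ^2)) * gpdf σ (t - x) := by
  unfold gpdf
  rw [show Real.exp (-(x^2)/(2*σ^2)) * ((Real.sqrt (2*Real.pi) * σ)⁻¹
      * Real.exp (-((t-x)^2)/(2*σ^2)))
    = (Real.sqrt (2*Real.pi) * σ)⁻¹
      * (Real.exp (-(x^2)/(2*σ^2)) * Real.exp (-((t-x)^2)/(2*σ^2))) by ring,
    ← Real.exp_add]
  apply mul_le_mul_of_nonneg_left _ (by positivity)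
  apply Real.exp_le_exp.mpr
  rw [← add_div, div_le_div_iff_of_pos_right (by positivity)]
  nlinarith

lemma shift_integral_Iic (hσ : 0 < σ) (x : ℝ) :
    ∫ t in Set.Iic x, gpdf σ (t - x) = ∫ t in Set.Iic (0:ℝ), gpdf σ t := by
  rw [← integral_indicator measurableSet_Iic, ← integral_indicator measurableSet_Iic]
  have : Set.indicator (Set.Iic x) (fun t => gpdf σ (t - x))
      = fun t => Set.indicator (Set.Iic (0:ℝ)) (gpdf σ) (t - x) := by
    funext t
    by_cases ht : t ≤ x
    · rw [Set.indicator_of_mem (Set.mem_Iic.mpr ht),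
        Set.indicator_of_mem (Set.mem_Iic.mpr (by linarith))]
    · rw [Set.indicator_of_notMem (fun hc => ht (Set.mem_Iic.mp hc)),
        Set.indicator_of_notMem (fun hc => ht (by have := Set.mem_Iic.mp hc; linarith))]
  rw [this, integral_sub_right_eq_self (Set.indicator (Set.Iic (0:ℝ)) (gpdf σ)) x]

lemma shift_integral_Ioi (hσ : 0 < σ) (x : ℝ) :
    ∫ t in Set.Ioi x, gpdf σ (t - x) = ∫ t in Set.Ioi (0:ℝ), gpdf σ t := by
  rw [← integral_indicator measurableSet_Ioi, ← integral_indicator measurableSet_Ioi]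
  have : Set.indicator (Set.Ioi x) (fun t => gpdf σ (t - x))
      = fun t => Set.indicator (Set.Ioi (0:ℝ)) (gpdf σ) (t - x) := by
    funext t
    by_cases ht : x < t
    · rw [Set.indicator_of_mem (Set.mem_Ioi.mpr ht),
        Set.indicator_of_mem (Set.mem_Ioi.mpr (by linarith))]
    · rw [Set.indicator_of_notMem (fun hc => ht (Set.mem_Ioi.mp hc)),
        Set.indicator_of_notMem (fun hc => ht (by have := Set.mem_Ioi.mp hc; linarith))]
  rw [this, integral_sub_right_eq_self (Set.indicator (Set.Ioi (0:ℝ)) (gpdf σ)) x]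

lemma gauss_tail (hσ : 0 < σ) (x : ℝ) :
    min (gcdf σ x) (1 - gcdf σ x) ≤ (1/2) * Real.exp (-(x^2) / (2*σ^2)) := by
  set E := Real.exp (-(x^2) / (2*σ^2)) with hE
  have hInt : Integrable (fun t => gpdf σ (t - x)) := (gpdf_integrable hσ).comp_sub_right x
  rcases le_or_gt x 0 with hx | hx
  · apply le_trans (min_le_left _ _)
    unfold gcdf
    calc ∫ t in Set.Iic x, gpdf σ t ≤ ∫ t in Set.Iic x, E * gpdf σ (t - x) := by
          apply setIntegral_mono_on ((gpdf_integrable hσ).integrableOn)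
            ((hInt.const_mul E).integrableOn) measurableSet_Iic
          intro t ht
          apply gpdf_shift_le hσ x t
          have h1 : t - x ≤ 0 := by have := Set.mem_Iic.mp ht; linarith
          nlinarith
    _ = E * ∫ t in Set.Iic x, gpdf σ (t - x) := integral_const_mul E _
    _ = E * ∫ t in Set.Iic (0:ℝ), gpdf σ t := by rw [shift_integral_Iic hσ x]
    _ = E * gcdf σ 0 := rfl
    _ = (1/2) * E := by rw [gcdf_zero hσ]; ring
  · apply le_trans (min_le_right _ _)
    rw [gcdf_compl hσ x]
    calc ∫ t in Set.Ioi x, gpdf σ t ≤ ∫ t in Set.Ioi x, E * gpdf σ (t - x) := by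
          apply setIntegral_mono_on ((gpdf_integrable hσ).integrableOn)
            ((hInt.const_mul E).integrableOn) measurableSet_Ioi
          intro t ht
          apply gpdf_shift_le hσ x t
          have : 0 ≤ t - x := by simp at ht; linarith
          exact mul_nonneg hx.le this
    _ = E * ∫ t in Set.Ioi x, gpdf σ (t - x) := integral_const_mul E _
    _ = E * ∫ t in Set.Ioi (0:ℝ), gpdf σ t := by rw [shift_integral_Ioi hσ x]
    _ = (1/2) * E := by rw [integral_gpdf_Ioi hσ]; ring

lemma Wtil_eq_Wt (a₁ a₂ m : ℕ) (x : ℝ) : Wtil a₁ a₂ m x = Wt a₁ a₂ m x := rfl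

lemma Wtil_master (a₁ a₂ m : ℕ) (h : a₂ < a₁) (hm : m < 2^a₂) (u : ℝ)
    (h0 : 0 ≤ u) (h1 : u ≤ 1) :
    |Wtil a₁ a₂ m u| ≤ Real.sqrt (2^a₂) * hh a₁ * min u (1-u) ∧
    |Wtil a₁ a₂ m u| ≤ Real.sqrt (2^a₂) * hh a₁ * ((2:ℝ)^(a₂+1))⁻¹ := by
  rw [Wtil_eq_Wt]
  exact Wt_master a₁ a₂ m h hm u h0 h1

lemma interp (a b c t : ℝ) (ha : 0 ≤ a) (hb : 0 ≤ b) (hc : 0 ≤ c)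
    (h1 : a ≤ b) (h2 : a ≤ c) (ht0 : 0 ≤ t) (ht1 : t ≤ 1) :
    a ≤ b ^ (1-t) * c ^ t := by
  rcases eq_or_lt_of_le ha with h0 | h0
  · rw [← h0]; positivity
  · calc a = a ^ ((1-t) + t) := by rw [show (1-t)+t = 1 by ring, Real.rpow_one]
    _ = a ^ (1-t) * a ^ t := Real.rpow_add h0 _ _
    _ ≤ b ^ (1-t) * c ^ t :=
        mul_le_mul (Real.rpow_le_rpow ha h1 (by linarith))
          (Real.rpow_le_rpow ha h2 ht0)
          (Real.rpow_nonneg ha t) (Real.rpow_nonneg hb _)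

theorem stmt15 (σ ρ : ℝ) (hσ : 0 < σ) (hσρ : σ ≤ ρ)
    (a₁ a₂ m : ℕ) (h : a₂ < a₁) (hm : m < 2 ^ a₂) :
    ∀ x : ℝ, |Wtil a₁ a₂ m (gcdf σ x)| / gpdf ρ x
      ≤ (2:ℝ) ^ (σ ^ 2 / ρ ^ 2) * Real.sqrt (Real.pi / 8) * ρ *
          ((2:ℝ) ^ ((a₂ : ℝ) / 2) / (2:ℝ) ^ ((a₁ : ℝ) + (1 - σ ^ 2 / ρ ^ 2) * a₂)) := by
  intro x
  have hρ : 0 < ρ := lt_of_lt_of_le hσ hσρ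
  set t : ℝ := σ^2 / ρ^2 with htdef
  have ht0 : 0 < t := by positivity
  have ht1 : t ≤ 1 := by
    rw [htdef, div_le_one (by positivity)]
    nlinarith
  set u := gcdf σ x with hu
  have hu0 : 0 ≤ u := gcdf_nonneg hσ x
  have hu1 : u ≤ 1 := gcdf_le_one hσ x
  set C : ℝ := Real.sqrt (2^a₂) * hh a₁ with hC
  have hsq : (0:ℝ) < Real.sqrt (2^a₂) := Real.sqrt_pos.mpr (by positivity)
  have hCpos : 0 < C := by
    rw [hC]; unfold hh; positivity
  set E : ℝ := Real.exp (-(x^2) / (2*σ^2)) with hE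
  have hEpos : 0 < E := Real.exp_pos _
  have hP : 0 < gpdf ρ x := gpdf_pos hρ x
  obtain ⟨hb1, hb2⟩ := Wtil_master a₁ a₂ m h hm u hu0 hu1
  have hmin : C * min u (1-u) ≤ C * ((1/2)*E) :=
    mul_le_mul_of_nonneg_left (gauss_tail hσ x) hCpos.le
  set β : ℝ := ((2:ℝ)^(a₂+1))⁻¹ with hβ
  have hβpos : 0 < β := by rw [hβ]; positivity
  have step1 : |Wtil a₁ a₂ m u| ≤ (C * β)^(1-t) * (C * ((1/2)*E))^t :=
    interp _ _ _ t (abs_nonneg _) (by positivity) (by positivity) hb2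
      (le_trans hb1 hmin) ht0.le ht1
  have hfact : (C * β)^(1-t) * (C * ((1/2)*E))^t
      = C * (β^(1-t) * (((1/2):ℝ)^t * E^t)) := by
    rw [Real.mul_rpow hCpos.le hβpos.le, Real.mul_rpow hCpos.le (by positivity),
      Real.mul_rpow (by norm_num) hEpos.le]
    have hCC : C^(1-t) * C^t = C := by
      rw [← Real.rpow_add hCpos, show (1-t)+t = 1 by ring, Real.rpow_one]
    calc C^(1-t) * β^(1-t) * (C^t * (((1/2):ℝ)^t * E^t))
        = (C^(1-t) * C^t) * (β^(1-t) * (((1/2):ℝ)^t * E^t)) := by ring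
    _ = C * (β^(1-t) * (((1/2):ℝ)^t * E^t)) := by rw [hCC]
  have hσne : σ ≠ 0 := hσ.ne'
  have hρne : ρ ≠ 0 := hρ.ne'
  have hEt : E^t = Real.exp (-(x^2)/(2*ρ^2)) := by
    rw [hE, Real.rpow_def_of_pos (Real.exp_pos _), Real.log_exp]
    congr 1
    rw [htdef]
    field_simp
  -- divide by gpdf
  rw [div_le_iff₀ hP]
  apply le_trans (le_of_le_of_eq step1 hfact)
  -- now : C * (β^(1-t) * ((1/2)^t * E^t)) ≤ RHS * gpdf ρ x
  have hgpdf : gpdf ρ x = (Real.sqrt (2 * Real.pi) * ρ)⁻¹ * Real.exp (-(x^2)/(2*ρ^2)) := rfl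
  rw [hEt, hgpdf]
  have h2π : (0:ℝ) < Real.sqrt (2 * Real.pi) := Real.sqrt_pos.mpr (by positivity)
  have hexpos : (0:ℝ) < Real.exp (-(x^2)/(2*ρ^2)) := Real.exp_pos _
  -- key numeric inequality
  have hnum : C * (β^(1-t) * ((1/2):ℝ)^t) * (Real.sqrt (2*Real.pi) * ρ)
      ≤ (2:ℝ) ^ t * Real.sqrt (Real.pi / 8) * ρ *
          ((2:ℝ) ^ ((a₂ : ℝ) / 2) / (2:ℝ) ^ ((a₁ : ℝ) + (1 - t) * a₂)) := by
    have hr2 : (0:ℝ) < 2 := two_pos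
    have e0 : Real.sqrt ((2:ℝ)^a₂) = (2:ℝ)^((a₂:ℝ)/2) := by
      rw [Real.sqrt_eq_rpow, ← Real.rpow_natCast 2 a₂, ← Real.rpow_mul hr2.le]
      congr 1; ring
    have ehh : hh a₁ = (2:ℝ)^(-((a₁:ℝ)+1)) := by
      unfold hh
      rw [← Real.rpow_natCast 2 (a₁+1), ← Real.rpow_neg hr2.le]
      congr 1; push_cast; ring
    have e1 : C = (2:ℝ)^((a₂:ℝ)/2 - ((a₁:ℝ)+1)) := by
      rw [hC, e0, ehh, ← Real.rpow_add hr2]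
      ring_nf
    have e2 : β^(1-t) = (2:ℝ)^(-(((a₂:ℝ)+1))*(1-t)) := by
      rw [hβ, ← Real.rpow_natCast 2 (a₂+1), ← Real.rpow_neg hr2.le,
        ← Real.rpow_mul hr2.le]
      congr 1; push_cast; ring
    have e3 : ((1/2):ℝ)^t = (2:ℝ)^(-t) := by
      rw [show ((1:ℝ)/2) = (2:ℝ)^(-(1:ℝ)) by rw [Real.rpow_neg_one]; norm_num,
        ← Real.rpow_mul hr2.le]
      congr 1; ring
    have e4 : Real.sqrt (2*Real.pi) = Real.sqrt (Real.pi/8) * 4 := by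
      rw [show (2:ℝ)*Real.pi = (Real.pi/8)*4^2 by ring,
        Real.sqrt_mul (by positivity), Real.sqrt_sq (by norm_num)]
    have e5 : (2:ℝ) ^ ((a₂ : ℝ) / 2) / (2:ℝ) ^ ((a₁ : ℝ) + (1 - t) * a₂)
        = (2:ℝ) ^ ((a₂:ℝ)/2 - ((a₁:ℝ) + (1-t)*a₂)) := by
      rw [Real.rpow_sub hr2]
    have e6 : (4:ℝ) = (2:ℝ)^(2:ℝ) := by
      rw [show (2:ℝ) = ((2:ℕ):ℝ) by norm_num, Real.rpow_natCast]; norm_num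
    rw [e1, e2, e3, e4, e5]
    calc (2:ℝ)^((a₂:ℝ)/2 - ((a₁:ℝ)+1)) * ((2:ℝ)^(-(((a₂:ℝ)+1))*(1-t)) * (2:ℝ)^(-t))
          * (Real.sqrt (Real.pi/8) * 4 * ρ)
        = Real.sqrt (Real.pi/8) * ρ *
            ((2:ℝ)^((a₂:ℝ)/2 - ((a₁:ℝ)+1)) * (2:ℝ)^(-(((a₂:ℝ)+1))*(1-t)) * (2:ℝ)^(-t)
              * (2:ℝ)^(2:ℝ)) := by rw [← e6]; ring
    _ = Real.sqrt (Real.pi/8) * ρ *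
          (2:ℝ)^(((a₂:ℝ)/2 - ((a₁:ℝ)+1)) + (-(((a₂:ℝ)+1))*(1-t)) + (-t) + 2) := by
        rw [← Real.rpow_add hr2, ← Real.rpow_add hr2, ← Real.rpow_add hr2]
    _ ≤ Real.sqrt (Real.pi/8) * ρ *
          (2:ℝ)^(t + ((a₂:ℝ)/2 - ((a₁:ℝ) + (1-t)*a₂))) := by
        apply mul_le_mul_of_nonneg_left _ (by positivity)
        apply Real.rpow_le_rpow_of_exponent_le (by norm_num)
        nlinarith [ht0.le]
    _ = (2:ℝ)^t * Real.sqrt (Real.pi/8) * ρ *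
          (2:ℝ)^((a₂:ℝ)/2 - ((a₁:ℝ) + (1-t)*a₂)) := by
        rw [Real.rpow_add hr2]; ring
  calc C * (β^(1-t) * (((1/2):ℝ)^t * Real.exp (-(x^2)/(2*ρ^2))))
      = (C * (β^(1-t) * ((1/2):ℝ)^t) * (Real.sqrt (2*Real.pi) * ρ))
          * ((Real.sqrt (2*Real.pi) * ρ)⁻¹ * Real.exp (-(x^2)/(2*ρ^2))) := by
        field_simp
  _ ≤ ((2:ℝ) ^ t * Real.sqrt (Real.pi / 8) * ρ *
          ((2:ℝ) ^ ((a₂ : ℝ) / 2) / (2:ℝ) ^ ((a₁ : ℝ) + (1 - t) * a₂)))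
          * ((Real.sqrt (2*Real.pi) * ρ)⁻¹ * Real.exp (-(x^2)/(2*ρ^2))) :=
        mul_le_mul_of_nonneg_right hnum (by positivity)

end
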